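/- arXiv:2006.04118 — 2 statements merged into one kernel-verified Lean document; each statement's English description precedes it below -/
import Mathlib

section
/- Let R be a ring and M a nonzero R-module of finite length. Suppose the socle of M is simple and isomorphic to a simple module L, the cosocle of M is simple and isomorphic to L, and L occurs with multiplicity exactly 1 among the Jordan–Hölder factors of M. Then M is simple (and hence M ≅ L). -/
open scoped Classical in
/-- Number of Jordan–Hölder factors of a composition series (of submodules of `M`)
isomorphic to the module `L`. -/
noncomputable def jhMult (R : Type*) [Ring R] {M : Type*} [AddCommGroup M] [Module R M]
    (L : Type*) [AddCommGroup L] [Module R L]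
    (s : CompositionSeries (Submodule R M)) : ℕ :=
  (Finset.univ.filter fun i : Fin s.length =>
    Nonempty ((↥(s i.succ) ⧸ ((s i.castSucc).comap (s i.succ).subtype)) ≃ₗ[R] L)).card

/-- `L` occurs as a Jordan–Hölder factor of `M`. -/
def OccursIn (R : Type*) [Ring R] (L : Type*) [AddCommGroup L] [Module R L]
    (M : Type*) [AddCommGroup M] [Module R M] : Prop :=
  ∃ s : CompositionSeries (Submodule R M), s.head = ⊥ ∧ s.last = ⊤ ∧ 1 ≤ jhMult R L s

/-- The Jordan–Hölder multiplicity of `L` in `M` equals `n`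
(for every composition series of `M`). -/
def MultEq (R : Type*) [Ring R] (L : Type*) [AddCommGroup L] [Module R L]
    (M : Type*) [AddCommGroup M] [Module R M] (n : ℕ) : Prop :=
  ∀ s : CompositionSeries (Submodule R M), s.head = ⊥ → s.last = ⊤ → jhMult R L s = n

/-- If a nonzero finite-length module `M` has simple socle isomorphic to `L`, simple
cosocle isomorphic to `L`, and `L` has multiplicity exactly one among the
Jordan–Hölder factors of `M`, then `M` is simple and `M ≅ L`.
(Here the socle is the sum of all simple (= atomic) submodules and the cosocle is the
quotient by the intersection of all maximal proper (= coatomic) submodules.) -/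
theorem simple_of_socle_cosocle_multOne
    {R M L : Type*} [Ring R] [AddCommGroup M] [Module R M] [Nontrivial M]
    [AddCommGroup L] [Module R L] [IsSimpleModule R L]
    (hfl : IsFiniteLength R M)
    (hsoc : IsSimpleModule R ↥(sSup {N : Submodule R M | IsAtom N}))
    (hsocL : Nonempty (↥(sSup {N : Submodule R M | IsAtom N}) ≃ₗ[R] L))
    (hcosoc : IsSimpleModule R (M ⧸ sInf {N : Submodule R M | IsCoatom N}))
    (hcosocL : Nonempty ((M ⧸ sInf {N : Submodule R M | IsCoatom N}) ≃ₗ[R] L))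
    (hmult : MultEq R L M 1) :
    IsSimpleModule R M ∧ Nonempty (M ≃ₗ[R] L) := by
  classical
  set S := sSup {N : Submodule R M | IsAtom N} with hSdef
  set K := sInf {N : Submodule R M | IsCoatom N} with hKdef
  have hSatom : IsAtom S := isSimpleModule_iff_isAtom.mp hsoc
  have hKcoatom : IsCoatom K := isSimpleModule_iff_isCoatom.mp hcosoc
  -- every atom equals S, every coatom equals K
  have hatom : ∀ A : Submodule R M, IsAtom A → A = S := by
    intro A hA
    have hle : A ≤ S := le_sSup hA
    rcases eq_or_ne A S with h | h
    · exact h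
    · exact absurd (hSatom.2 A (lt_of_le_of_ne hle h)) hA.1
  have hcoatom : ∀ C : Submodule R M, IsCoatom C → C = K := by
    intro C hC
    have hle : K ≤ C := sInf_le hC
    rcases eq_or_ne C K with h | h
    · exact h
    · exact absurd (hKcoatom.2 C (lt_of_le_of_ne hle (Ne.symm h))) hC.1
  obtain ⟨s, hhead, hlast⟩ := isFiniteLength_iff_exists_compositionSeries.mp hfl
  have hlen0 : s.length ≠ 0 := by
    intro h
    have : s.head = s.last := by
      unfold RelSeries.head RelSeries.last
      congr 1
      ext
      simp [h]
    rw [hhead, hlast] at this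
    exact bot_ne_top this
  set i0 : Fin s.length := ⟨0, Nat.pos_of_ne_zero hlen0⟩ with hi0
  set i1 : Fin s.length := ⟨s.length - 1, by omega⟩ with hi1
  have hcast0 : s i0.castSucc = ⊥ := hhead
  have hsucc1 : s i1.succ = ⊤ := by
    have : i1.succ = Fin.last s.length := by
      ext; simp [hi1]; omega
    rw [this]; exact hlast
  -- first factor
  have hs1S : s i0.succ = S := by
    have hstep := s.step i0
    rw [hcast0] at hstep
    exact hatom _ (bot_covBy_iff.mp hstep)
  have hfac0 : Nonempty ((↥(s i0.succ) ⧸ ((s i0.castSucc).comap (s i0.succ).subtype)) ≃ₗ[R] L) := by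
    rw [hcast0, hs1S]
    obtain ⟨e⟩ := hsocL
    have hbot : (⊥ : Submodule R M).comap S.subtype = ⊥ := by
      ext x; simp
    exact ⟨(Submodule.quotEquivOfEqBot _ hbot).trans e⟩
  -- last factor
  have hsK : s i1.castSucc = K := by
    have hstep := s.step i1
    rw [hsucc1] at hstep
    exact hcoatom _ (covBy_top_iff.mp hstep)
  have hfac1 : Nonempty ((↥(s i1.succ) ⧸ ((s i1.castSucc).comap (s i1.succ).subtype)) ≃ₗ[R] L) := by
    rw [hsucc1, hsK]
    obtain ⟨e⟩ := hcosocL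
    have hmap : (K.comap (⊤ : Submodule R M).subtype).map
        ((Submodule.topEquiv : (⊤ : Submodule R M) ≃ₗ[R] M) : (⊤ : Submodule R M) →ₗ[R] M) = K := by
      ext x
      simp [Submodule.mem_map, Submodule.mem_comap]
    exact ⟨(Submodule.Quotient.equiv _ K Submodule.topEquiv hmap).trans e⟩
  -- indices coincide
  have hcard := hmult s hhead hlast
  unfold jhMult at hcard
  have hmem0 : i0 ∈ Finset.univ.filter (fun i : Fin s.length =>
      Nonempty ((↥(s i.succ) ⧸ ((s i.castSucc).comap (s i.succ).subtype)) ≃ₗ[R] L)) := by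
    simp only [Finset.mem_filter, Finset.mem_univ, true_and]; exact hfac0
  have hmem1 : i1 ∈ Finset.univ.filter (fun i : Fin s.length =>
      Nonempty ((↥(s i.succ) ⧸ ((s i.castSucc).comap (s i.succ).subtype)) ≃ₗ[R] L)) := by
    simp only [Finset.mem_filter, Finset.mem_univ, true_and]; exact hfac1
  have hii : i0 = i1 := by
    by_contra hne
    have h2 : 1 < (Finset.univ.filter (fun i : Fin s.length =>
        Nonempty ((↥(s i.succ) ⧸ ((s i.castSucc).comap (s i.succ).subtype)) ≃ₗ[R] L))).card :=
      Finset.one_lt_card.mpr ⟨i0, hmem0, i1, hmem1, hne⟩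
    omega
  have hStop : S = ⊤ := by rw [← hs1S, hii, hsucc1]
  have htopatom : IsAtom (⊤ : Submodule R M) := hStop ▸ hSatom
  haveI : Nontrivial (Submodule R M) := ⟨⊥, ⊤, bot_ne_top⟩
  have hsimple : IsSimpleModule R M := by
    rw [isSimpleModule_iff]; constructor
    intro N
    rcases eq_or_ne N ⊤ with h | h
    · exact Or.inr h
    · exact Or.inl (htopatom.2 N (lt_top_iff_ne_top.mpr h))
  refine ⟨hsimple, ?_⟩
  obtain ⟨e⟩ := hsocL
  exact ⟨(Submodule.topEquiv.symm.trans (LinearEquiv.ofEq ⊤ S hStop.symm)).trans e⟩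
end

section
/- Let R be a ring, A and B R-modules of finite length, and L a simple R-module. Suppose A has a unique maximal proper submodule with quotient isomorphic to L, B has simple socle isomorphic to L, and L occurs with multiplicity exactly 1 in B. Then the image of any nonzero R-module homomorphism T : A → B is isomorphic to L. -/
section AuxLemmas

variable {R M L : Type*} [Ring R] [AddCommGroup M] [Module R M]
  [AddCommGroup L] [Module R L]

lemma factor_congr_aux {a b a' b' : Submodule R M} (ha : a = a') (hb : b = b') :
    Nonempty ((↥b ⧸ a.comap b.subtype) ≃ₗ[R] L) ↔
      Nonempty ((↥b' ⧸ a'.comap b'.subtype) ≃ₗ[R] L) := by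
  subst ha; subst hb; rfl

open scoped Classical in
lemma jhMult_le_snoc_aux (s : CompositionSeries (Submodule R M)) (x : Submodule R M)
    (h : JordanHolderLattice.IsMaximal s.last x) :
    jhMult R L s ≤ jhMult R L (s.snoc x h) := by
  unfold jhMult
  apply Finset.card_le_card_of_injOn
    (fun i : Fin s.length => (i.castSucc : Fin (s.snoc x h).length))
  · intro i hi
    simp only [Finset.mem_coe, Finset.mem_filter, Finset.mem_univ, true_and] at hi ⊢
    have h1 : (s.snoc x h) (i.castSucc : Fin (s.snoc x h).length).succ = s i.succ := by
      rw [Fin.succ_castSucc]; exact RelSeries.snoc_castSucc s x h i.succ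
    have h2 : (s.snoc x h) (i.castSucc : Fin (s.snoc x h).length).castSucc = s i.castSucc :=
      RelSeries.snoc_castSucc s x h i.castSucc
    exact Finset.mem_coe.mpr (Finset.mem_filter.mpr ⟨Finset.mem_univ _, (factor_congr_aux h2 h1).mpr hi⟩)
  · intro i _ j _ hij
    exact Fin.castSucc_injective _ hij

open scoped Classical in
lemma jhMult_succ_le_snoc_aux (s : CompositionSeries (Submodule R M)) (x : Submodule R M)
    (h : JordanHolderLattice.IsMaximal s.last x)
    (hL : Nonempty ((↥x ⧸ (s.last.comap x.subtype)) ≃ₗ[R] L)) :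
    jhMult R L s + 1 ≤ jhMult R L (s.snoc x h) := by
  unfold jhMult
  set F : Finset (Fin s.length) := Finset.univ.filter fun i : Fin s.length =>
    Nonempty ((↥(s i.succ) ⧸ ((s i.castSucc).comap (s i.succ).subtype)) ≃ₗ[R] L) with hF
  set G : Finset (Fin (s.snoc x h).length) := Finset.univ.filter fun i =>
    Nonempty ((↥((s.snoc x h) i.succ) ⧸
      (((s.snoc x h) i.castSucc).comap ((s.snoc x h) i.succ).subtype)) ≃ₗ[R] L) with hG
  have hmaplast : (Fin.last s.length : Fin (s.snoc x h).length) ∉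
      F.image (fun i : Fin s.length => (i.castSucc : Fin (s.snoc x h).length)) := by
    simp only [Finset.mem_image]
    rintro ⟨i, -, hi⟩
    exact (Fin.castSucc_lt_last i).ne hi
  have hsub : insert (Fin.last s.length : Fin (s.snoc x h).length)
      (F.image (fun i : Fin s.length => (i.castSucc : Fin (s.snoc x h).length))) ⊆ G := by
    intro j hj
    rcases Finset.mem_insert.mp hj with hj | hj
    · subst hj
      simp only [hG, Finset.mem_filter, Finset.mem_univ, true_and]
      have h1 : (s.snoc x h) (Fin.last s.length : Fin (s.snoc x h).length).succ = x := by
        rw [Fin.succ_last]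
        exact RelSeries.last_snoc' s x h
      have h2 : (s.snoc x h) (Fin.last s.length : Fin (s.snoc x h).length).castSucc = s.last :=
        RelSeries.snoc_castSucc s x h (Fin.last s.length)
      exact Finset.mem_filter.mpr ⟨Finset.mem_univ _, (factor_congr_aux h2 h1).mpr hL⟩
    · obtain ⟨i, hi, rfl⟩ := Finset.mem_image.mp hj
      simp only [hF, Finset.mem_filter, Finset.mem_univ, true_and] at hi
      simp only [hG, Finset.mem_filter, Finset.mem_univ, true_and]
      have h1 : (s.snoc x h) (i.castSucc : Fin (s.snoc x h).length).succ = s i.succ := by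
        rw [Fin.succ_castSucc]; exact RelSeries.snoc_castSucc s x h i.succ
      have h2 : (s.snoc x h) (i.castSucc : Fin (s.snoc x h).length).castSucc = s i.castSucc :=
        RelSeries.snoc_castSucc s x h i.castSucc
      exact Finset.mem_filter.mpr ⟨Finset.mem_univ _, (factor_congr_aux h2 h1).mpr hi⟩
    
  calc F.card + 1
      = (F.image (fun i : Fin s.length => (i.castSucc : Fin (s.snoc x h).length))).card + 1 := by
        rw [Finset.card_image_of_injective _ (Fin.castSucc_injective _)]
    _ = (insert (Fin.last s.length : Fin (s.snoc x h).length)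
          (F.image (fun i : Fin s.length => (i.castSucc : Fin (s.snoc x h).length)))).card := by
        rw [Finset.card_insert_of_notMem hmaplast]
    _ ≤ G.card := Finset.card_le_card hsub

lemma exists_covBy_of_lt_aux [IsNoetherian R M] {x y : Submodule R M} (hxy : x < y) :
    ∃ z : Submodule R M, x ≤ z ∧ z ⋖ y := by
  have hwf : WellFoundedGT (Submodule R M) := inferInstance
  obtain ⟨z, ⟨hxz, hzy⟩, hmax⟩ := hwf.wf.has_min {z | x ≤ z ∧ z < y} ⟨x, le_rfl, hxy⟩
  refine ⟨z, hxz, hzy, fun w hzw hwy => hmax w ⟨hxz.trans hzw.le, hwy⟩ hzw⟩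

lemma exists_series_from_to_aux [IsNoetherian R M] [IsArtinian R M]
    (x : Submodule R M) :
    ∀ y : Submodule R M, x ≤ y →
      ∃ s : CompositionSeries (Submodule R M), s.head = x ∧ s.last = y := by
  intro y
  induction y using WellFoundedLT.induction with
  | ind y ih =>
    intro hxy
    rcases eq_or_lt_of_le hxy with rfl | hlt
    · exact ⟨RelSeries.singleton _ x, rfl, rfl⟩
    · obtain ⟨z, hxz, hcov⟩ := exists_covBy_of_lt_aux hlt
      obtain ⟨s, hh, hl⟩ := ih z hcov.lt hxz
      refine ⟨s.snoc y (show s.last ⋖ y from hl ▸ hcov), ?_, ?_⟩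
      · rw [RelSeries.head_snoc]; exact hh
      · exact RelSeries.last_snoc _ _ _

lemma exists_extension_aux [IsNoetherian R M] [IsArtinian R M]
    (s : CompositionSeries (Submodule R M)) :
    ∀ y : Submodule R M, s.last ≤ y →
      ∃ t : CompositionSeries (Submodule R M), t.head = s.head ∧ t.last = y ∧
        jhMult R L s ≤ jhMult R L t := by
  intro y
  induction y using WellFoundedLT.induction with
  | ind y ih =>
    intro hxy
    rcases eq_or_lt_of_le hxy with heq | hlt
    · exact ⟨s, rfl, heq, le_rfl⟩
    · obtain ⟨z, hxz, hcov⟩ := exists_covBy_of_lt_aux hlt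
      obtain ⟨t, hh, hl, hm⟩ := ih z hcov.lt hxz
      refine ⟨t.snoc y (show t.last ⋖ y from hl ▸ hcov), ?_, ?_, ?_⟩
      · rw [RelSeries.head_snoc]; exact hh
      · exact RelSeries.last_snoc _ _ _
      · exact hm.trans (jhMult_le_snoc_aux t y _)

end AuxLemmas

/-- If `A` has a unique maximal proper submodule with quotient isomorphic to the simple
module `L`, `B` has simple socle isomorphic to `L`, and `L` occurs with multiplicity
exactly one in `B`, then the image of any nonzero homomorphism `T : A → B` is
isomorphic to `L`. -/
theorem image_iso_of_unique_top_and_simple_socle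
    {R A B L : Type*} [Ring R] [AddCommGroup A] [Module R A]
    [AddCommGroup B] [Module R B] [AddCommGroup L] [Module R L]
    [IsSimpleModule R L]
    (hA : IsFiniteLength R A) (hB : IsFiniteLength R B)
    (K : Submodule R A) (hK : IsCoatom K)
    (hKuniq : ∀ N : Submodule R A, IsCoatom N → N = K)
    (hKL : Nonempty ((A ⧸ K) ≃ₗ[R] L))
    (hsoc : IsSimpleModule R ↥(sSup {N : Submodule R B | IsAtom N}))
    (hsocL : Nonempty (↥(sSup {N : Submodule R B | IsAtom N}) ≃ₗ[R] L))
    (hmultB : MultEq R L B 1)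
    (T : A →ₗ[R] B) (hT : T ≠ 0) :
    Nonempty (↥(LinearMap.range T) ≃ₗ[R] L) := by
  obtain ⟨hAnoe, hAart⟩ := isFiniteLength_iff_isNoetherian_isArtinian.mp hA
  obtain ⟨hBnoe, hBart⟩ := isFiniteLength_iff_isNoetherian_isArtinian.mp hB
  -- the socle
  set S : Submodule R B := sSup {N : Submodule R B | IsAtom N} with hS
  have hS_atom : IsAtom S := isSimpleModule_iff_isAtom.mp hsoc
  have hS_le : ∀ N : Submodule R B, N ≠ ⊥ → S ≤ N := by
    intro N hN
    obtain ⟨a, ha, haN⟩ := (eq_bot_or_exists_atom_le N).resolve_left hN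
    have haS : a ≤ S := le_sSup ha
    rcases eq_or_lt_of_le haS with heq | hlt
    · exact heq ▸ haN
    · exact absurd (hS_atom.2 _ hlt) ha.1
  -- the kernel is contained in K
  have hker : LinearMap.ker T ≤ K := by
    have hne : LinearMap.ker T ≠ ⊤ := fun h => hT (LinearMap.ker_eq_top.mp h)
    obtain ⟨N, hN, hle⟩ := (eq_top_or_exists_le_coatom (LinearMap.ker T)).resolve_left hne
    exact (hKuniq N hN) ▸ hle
  -- the image of K
  set K' : Submodule R B := Submodule.map T K with hK'def
  set K'' : Submodule R ↥(LinearMap.range T) := K'.comap (LinearMap.range T).subtype with hK''def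
  -- the quotient of the range by K'' is isomorphic to A ⧸ K
  have hφ : ∃ e : (A ⧸ K) ≃ₗ[R] (↥(LinearMap.range T) ⧸ K''), True := by
    set φ : A →ₗ[R] ↥(LinearMap.range T) ⧸ K'' := K''.mkQ.comp T.rangeRestrict with hφdef
    have hsurj : Function.Surjective φ :=
      (Submodule.mkQ_surjective K'').comp T.surjective_rangeRestrict
    have hkerφ : LinearMap.ker φ = K := by
      rw [hφdef, LinearMap.ker_comp, Submodule.ker_mkQ, hK''def, ← Submodule.comap_comp,
        LinearMap.subtype_comp_codRestrict, Submodule.comap_map_eq, sup_eq_left.mpr hker]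
    exact ⟨(Submodule.quotEquivOfEq K (LinearMap.ker φ) hkerφ.symm).trans
      (φ.quotKerEquivOfSurjective hsurj), trivial⟩
  obtain ⟨e, -⟩ := hφ
  obtain ⟨eKL⟩ := hKL
  have hquot : Nonempty ((↥(LinearMap.range T) ⧸ K'') ≃ₗ[R] L) := ⟨e.symm.trans eKL⟩
  by_cases hK'bot : K' = ⊥
  · -- K' = ⊥ : the range is isomorphic to L
    have hK''bot : K'' = ⊥ := by
      rw [hK''def, hK'bot, Submodule.comap_bot, Submodule.ker_subtype]
    obtain ⟨f⟩ := hquot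
    exact ⟨(Submodule.quotEquivOfEqBot K'' hK''bot).symm.trans f⟩
  · -- K' ≠ ⊥ : derive a contradiction with multiplicity one
    exfalso
    have hSK' : S ≤ K' := hS_le K' hK'bot
    have hsimple : IsSimpleModule R (↥(LinearMap.range T) ⧸ K'') := by
      obtain ⟨f⟩ := hquot
      exact IsSimpleModule.congr f
    have hcov : K' ⋖ LinearMap.range T :=
      (covBy_iff_quot_is_simple LinearMap.map_le_range).mpr hsimple
    -- build a composition series with at least two factors isomorphic to L
    have hbotS : (⊥ : Submodule R B) ⋖ S := hS_atom.bot_covBy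
    have hfactS : Nonempty ((↥S ⧸ ((⊥ : Submodule R B).comap S.subtype)) ≃ₗ[R] L) := by
      obtain ⟨f⟩ := hsocL
      have hb : (⊥ : Submodule R B).comap S.subtype = ⊥ := by
        rw [Submodule.comap_bot, Submodule.ker_subtype]
      exact ⟨(Submodule.quotEquivOfEqBot _ hb).trans f⟩
    obtain ⟨s0, hs0head, hs0last, hs0mult⟩ :
        ∃ s0 : CompositionSeries (Submodule R B),
          s0.head = ⊥ ∧ s0.last = S ∧ 1 ≤ jhMult R L s0 := by
      refine ⟨(RelSeries.singleton _ (⊥ : Submodule R B)).snoc S hbotS,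
        by exact (RelSeries.head_snoc _ _ _).trans rfl, RelSeries.last_snoc _ _ _, ?_⟩
      have h := jhMult_succ_le_snoc_aux (L := L)
        (RelSeries.singleton _ (⊥ : Submodule R B)) S hbotS hfactS
      omega
    -- extend to K'
    obtain ⟨t1, ht1h, ht1l, ht1m⟩ :=
      exists_extension_aux (L := L) s0 K' (hs0last ▸ hSK')
    -- snoc range T
    have hfactR : Nonempty ((↥(LinearMap.range T) ⧸
        (t1.last.comap (LinearMap.range T).subtype)) ≃ₗ[R] L) := by
      rw [ht1l]; exact hquot
    obtain ⟨s2, hs2h, hs2l, hs2m⟩ :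
        ∃ s2 : CompositionSeries (Submodule R B),
          s2.head = ⊥ ∧ s2.last = LinearMap.range T ∧ 2 ≤ jhMult R L s2 := by
      refine ⟨t1.snoc (LinearMap.range T)
        (show t1.last ⋖ LinearMap.range T from ht1l ▸ hcov), ?_, RelSeries.last_snoc _ _ _, ?_⟩
      · rw [RelSeries.head_snoc, ht1h, hs0head]
      · have h := jhMult_succ_le_snoc_aux t1 (LinearMap.range T)
          (show t1.last ⋖ LinearMap.range T from ht1l ▸ hcov) hfactR
        omega
    -- extend to ⊤
    obtain ⟨t2, ht2h, ht2l, ht2m⟩ :=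
      exists_extension_aux (L := L) s2 ⊤ le_top
    have : jhMult R L t2 = 1 := hmultB t2 (ht2h.trans hs2h) ht2l
    omega
end
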